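/- arXiv:2503.12965 — 17 statements merged into one kernel-verified Lean document; each statement's English description precedes it below -/
import Mathlib

section
/- For any subordination algebra (A, ≺) (a bounded distributive lattice A with a relation ≺ satisfying (⊥-⊤), (AND), (OR), (WO-SI)) and elements a, b, c ∈ A, we have c ≤ a ⇒_≺ b in the canonical extension A^δ if and only if a ∧ c ≺ b, where a ⇒_≺ b := ⋁{c ∈ A | a ∧ c ≺ b}. -/
/-- A subordination algebra relation on a bounded distributive lattice. -/
structure SubordAlg (A : Type*) [DistribLattice A] [BoundedOrder A] where
  prec : A → A → Prop
  prec_bot : prec ⊥ ⊥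
  prec_top : prec ⊤ ⊤
  prec_and : ∀ {a b c : A}, prec a b → prec a c → prec a (b ⊓ c)
  prec_or : ∀ {a b c : A}, prec a c → prec b c → prec (a ⊔ b) c
  prec_wosi : ∀ {a b c d : A}, a ≤ b → prec b c → c ≤ d → prec a d

/-- A presentation of the canonical extension of a bounded (distributive) lattice `A`:
a complete lattice `Aδ` together with a dense and compact lattice embedding. -/
structure CanExt (A : Type*) [DistribLattice A] [BoundedOrder A]
    (Aδ : Type*) [CompleteLattice Aδ] where
  e : A → Aδ
  le_iff : ∀ a b : A, a ≤ b ↔ e a ≤ e b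
  map_inf : ∀ a b : A, e (a ⊓ b) = e a ⊓ e b
  map_sup : ∀ a b : A, e (a ⊔ b) = e a ⊔ e b
  map_bot : e ⊥ = ⊥
  map_top : e ⊤ = ⊤
  dense_closed : ∀ u : Aδ,
    u = sSup {k | (∃ F : Set A, F.Nonempty ∧ k = sInf (e '' F)) ∧ k ≤ u}
  dense_open : ∀ u : Aδ,
    u = sInf {o | (∃ I : Set A, I.Nonempty ∧ o = sSup (e '' I)) ∧ u ≤ o}
  compact : ∀ F I : Set A, F.Nonempty → I.Nonempty →
    sInf (e '' F) ≤ sSup (e '' I) →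
    ∃ F' I' : Set A, F' ⊆ F ∧ I' ⊆ I ∧ F'.Finite ∧ I'.Finite ∧
      sInf (e '' F') ≤ sSup (e '' I')

/-- Closed elements of the canonical extension: meets of nonempty subsets of `A`. -/
def CanExt.IsClosed {A : Type*} [DistribLattice A] [BoundedOrder A]
    {Aδ : Type*} [CompleteLattice Aδ] (C : CanExt A Aδ) (k : Aδ) : Prop :=
  ∃ F : Set A, F.Nonempty ∧ k = sInf (C.e '' F)

/-- Open elements of the canonical extension: joins of nonempty subsets of `A`. -/
def CanExt.IsOpen {A : Type*} [DistribLattice A] [BoundedOrder A]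
    {Aδ : Type*} [CompleteLattice Aδ] (C : CanExt A Aδ) (o : Aδ) : Prop :=
  ∃ I : Set A, I.Nonempty ∧ o = sSup (C.e '' I)

/-- The slanted implication `a ⇒_≺ b := ⋁{c | a ⊓ c ≺ b}` induced by a relation. -/
def slantImp {A : Type*} [DistribLattice A] [BoundedOrder A]
    {Aδ : Type*} [CompleteLattice Aδ] (C : CanExt A Aδ)
    (R : A → A → Prop) (a b : A) : Aδ :=
  sSup (C.e '' {c | R (a ⊓ c) b})

/-- The slanted co-implication `a ⩾_≺ b := ⋀{c | b ≺ a ⊔ c}` induced by a relation. -/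
def slantCoimp {A : Type*} [DistribLattice A] [BoundedOrder A]
    {Aδ : Type*} [CompleteLattice Aδ] (C : CanExt A Aδ)
    (R : A → A → Prop) (a b : A) : Aδ :=
  sInf (C.e '' {c | R b (a ⊔ c)})

/-- The slanted negation `¬a := ⋁{c | a ⊓ c ≺ ⊥}`. -/
def slantNeg {A : Type*} [DistribLattice A] [BoundedOrder A]
    {Aδ : Type*} [CompleteLattice Aδ] (C : CanExt A Aδ)
    (R : A → A → Prop) (a : A) : Aδ :=
  sSup (C.e '' {c | R (a ⊓ c) ⊥})

/-- The slanted co-negation `∼a := ⋀{c | ⊤ ≺ a ⊔ c}`. -/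
def slantSim {A : Type*} [DistribLattice A] [BoundedOrder A]
    {Aδ : Type*} [CompleteLattice Aδ] (C : CanExt A Aδ)
    (R : A → A → Prop) (a : A) : Aδ :=
  sInf (C.e '' {c | R ⊤ (a ⊔ c)})

/-- A slanted Heyting algebra over a canonical extension `C`. -/
structure SlantedHeyting (A : Type*) [DistribLattice A] [BoundedOrder A]
    (Aδ : Type*) [CompleteLattice Aδ] (C : CanExt A Aδ) where
  imp : A → A → Aδ
  imp_open : ∀ a b : A, C.IsOpen (imp a b)
  imp_inf : ∀ a b₁ b₂ : A, imp a (b₁ ⊓ b₂) = imp a b₁ ⊓ imp a b₂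
  imp_top : ∀ a : A, imp a ⊤ = ⊤
  sup_imp : ∀ a₁ a₂ b : A, imp (a₁ ⊔ a₂) b = imp a₁ b ⊓ imp a₂ b
  bot_imp : ∀ b : A, imp ⊥ b = ⊤
  resid : ∀ a b c : A, C.e c ≤ imp a b ↔ C.e (a ⊓ c) ≤ imp ⊤ b

/-- A slanted co-Heyting algebra over a canonical extension `C`. -/
structure SlantedCoHeyting (A : Type*) [DistribLattice A] [BoundedOrder A]
    (Aδ : Type*) [CompleteLattice Aδ] (C : CanExt A Aδ) where
  coimp : A → A → Aδ
  coimp_closed : ∀ a b : A, C.IsClosed (coimp a b)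
  coimp_sup : ∀ a b₁ b₂ : A, coimp a (b₁ ⊔ b₂) = coimp a b₁ ⊔ coimp a b₂
  coimp_bot : ∀ a : A, coimp a ⊥ = ⊥
  inf_coimp : ∀ a₁ a₂ b : A, coimp (a₁ ⊓ a₂) b = coimp a₁ b ⊔ coimp a₂ b
  top_coimp : ∀ b : A, coimp ⊤ b = ⊥
  resid : ∀ a b c : A, coimp a b ≤ C.e c ↔ coimp ⊥ b ≤ C.e (a ⊔ c)

/-- The π-extension of a slanted implication on a closed first argument and open
second argument: `k ⇒^π o := ⋁{a ⇒ b | k ≤ a, b ≤ o}`. -/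
def impPiKO {A : Type*} [DistribLattice A] [BoundedOrder A]
    {Aδ : Type*} [CompleteLattice Aδ] {C : CanExt A Aδ}
    (H : SlantedHeyting A Aδ C) (k o : Aδ) : Aδ :=
  sSup {u | ∃ a b : A, u = H.imp a b ∧ k ≤ C.e a ∧ C.e b ≤ o}

/-- The π-extension of a slanted implication on arbitrary arguments. -/
def impPi {A : Type*} [DistribLattice A] [BoundedOrder A]
    {Aδ : Type*} [CompleteLattice Aδ] {C : CanExt A Aδ}
    (H : SlantedHeyting A Aδ C) (u v : Aδ) : Aδ :=
  sInf {w | ∃ k o : Aδ, C.IsClosed k ∧ C.IsOpen o ∧ k ≤ u ∧ v ≤ o ∧ w = impPiKO H k o}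

theorem stmt0 {A : Type*} [DistribLattice A] [BoundedOrder A]
    {Aδ : Type*} [CompleteLattice Aδ] (C : CanExt A Aδ) (S : SubordAlg A)
    (a b c : A) :
    C.e c ≤ slantImp C S.prec a b ↔ S.prec (a ⊓ c) b := by
  constructor
  · intro h
    obtain ⟨F', I', hF', hI', hFfin, hIfin, hle⟩ :=
      C.compact {c} {d | S.prec (a ⊓ d) b} ⟨c, rfl⟩
        ⟨⊥, S.prec_wosi inf_le_right S.prec_bot bot_le⟩ (by
          rw [Set.image_singleton, sInf_singleton]
          exact le_trans h le_rfl)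
    -- e c ≤ sInf (e '' F')
    have h1 : C.e c ≤ sInf (C.e '' F') := by
      apply le_sInf
      rintro x ⟨y, hy, rfl⟩
      have : y = c := hF' hy
      subst this; exact le_rfl
    set t := hIfin.toFinset with ht
    set d := t.sup id with hd
    have h2 : sSup (C.e '' I') ≤ C.e d := by
      apply sSup_le
      rintro x ⟨y, hy, rfl⟩
      exact (C.le_iff y d).1 (Finset.le_sup (f := id) (hIfin.mem_toFinset.2 hy))
    have hcd : c ≤ d := (C.le_iff c d).2 (le_trans h1 (le_trans hle h2))
    have hdprec : S.prec (a ⊓ d) b := by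
      have key : ∀ s : Finset A, (∀ x ∈ s, S.prec (a ⊓ x) b) →
          S.prec (a ⊓ s.sup id) b := by
        classical
        intro s
        induction s using Finset.induction_on with
        | empty =>
          intro _
          rw [Finset.sup_empty]
          exact S.prec_wosi (inf_le_right : a ⊓ ⊥ ≤ ⊥) S.prec_bot bot_le
        | insert x s' hx ih =>
          intro hs
          rw [Finset.sup_insert, inf_sup_left]
          exact S.prec_or (hs x (Finset.mem_insert_self x s'))
            (ih fun y hy => hs y (Finset.mem_insert_of_mem hy))
      exact key t fun x hx => hI' (hIfin.mem_toFinset.1 hx)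
    exact S.prec_wosi (inf_le_inf_left a hcd) hdprec le_rfl
  · intro h
    exact le_sSup ⟨c, h, rfl⟩
end

section
/- For any subordination algebra (A, ≺), the operation a ⇒_≺ b := ⋁{c ∈ A | a ∧ c ≺ b} (computed in the canonical extension A^δ) satisfies: a ⇒_≺ (b₁ ∧ b₂) = (a ⇒_≺ b₁) ∧ (a ⇒_≺ b₂) and a ⇒_≺ ⊤ = ⊤ for all a, b₁, b₂ ∈ A. -/
lemma prec_finsup {A : Type*} [DistribLattice A] [BoundedOrder A]
    (S : SubordAlg A) (a b : A) (s : Finset A)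
    (h : ∀ c ∈ s, S.prec (a ⊓ c) b) : S.prec (a ⊓ s.sup id) b := by
  classical
  induction s using Finset.induction_on with
  | empty =>
      simp only [Finset.sup_empty, inf_bot_eq]
      exact S.prec_wosi le_rfl S.prec_bot bot_le
  | @insert x s hx ih =>
      have h1 : S.prec (a ⊓ x) b := h x (Finset.mem_insert_self _ _)
      have h2 : S.prec (a ⊓ s.sup id) b := ih fun c hc => h c (Finset.mem_insert_of_mem hc)
      have := S.prec_or h1 h2
      refine S.prec_wosi ?_ this le_rfl
      simp [Finset.sup_insert, inf_sup_left]

lemma sSup_image_le_e_sup {A : Type*} [DistribLattice A] [BoundedOrder A]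
    {Aδ : Type*} [CompleteLattice Aδ] (C : CanExt A Aδ) (s : Finset A) :
    sSup (C.e '' ↑s) ≤ C.e (s.sup id) := by
  apply sSup_le
  rintro _ ⟨x, hx, rfl⟩
  exact (C.le_iff _ _).1 (Finset.le_sup (f := id) (by simpa using hx))

theorem stmt1 {A : Type*} [DistribLattice A] [BoundedOrder A]
    {Aδ : Type*} [CompleteLattice Aδ] (C : CanExt A Aδ) (S : SubordAlg A)
    (a b₁ b₂ : A) :
    slantImp C S.prec a (b₁ ⊓ b₂) = slantImp C S.prec a b₁ ⊓ slantImp C S.prec a b₂ ∧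
    slantImp C S.prec a ⊤ = ⊤ := by
  classical
  constructor
  · apply le_antisymm
    · apply le_inf
      · apply sSup_le
        rintro _ ⟨c, hc, rfl⟩
        exact le_sSup ⟨c, S.prec_wosi le_rfl hc inf_le_left, rfl⟩
      · apply sSup_le
        rintro _ ⟨c, hc, rfl⟩
        exact le_sSup ⟨c, S.prec_wosi le_rfl hc inf_le_right, rfl⟩
    · set u := slantImp C S.prec a b₁ ⊓ slantImp C S.prec a b₂ with hu
      rw [C.dense_closed u]
      apply sSup_le
      rintro k ⟨⟨F, hFne, rfl⟩, hk⟩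
      have hne : ∀ b : A, ({c | S.prec (a ⊓ c) b} : Set A).Nonempty := by
        intro b
        exact ⟨⊥, S.prec_wosi (by simp) S.prec_bot bot_le⟩
      have key : ∀ b : A, sInf (C.e '' F) ≤ slantImp C S.prec a b →
          ∃ c : A, S.prec (a ⊓ c) b ∧ sInf (C.e '' F) ≤ C.e c := by
        intro b hle
        obtain ⟨F', I', hF'sub, hI'sub, hF'fin, hI'fin, hcomp⟩ :=
          C.compact F _ hFne (hne b) hle
        refine ⟨(hI'fin.toFinset).sup id, ?_, ?_⟩
        · apply prec_finsup
          intro c hc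
          exact hI'sub (hI'fin.mem_toFinset.1 hc)
        · calc sInf (C.e '' F) ≤ sInf (C.e '' F') :=
                sInf_le_sInf (Set.image_mono hF'sub)
            _ ≤ sSup (C.e '' I') := hcomp
            _ ≤ C.e ((hI'fin.toFinset).sup id) := by
                simpa [hI'fin.coe_toFinset] using sSup_image_le_e_sup C hI'fin.toFinset
      obtain ⟨c₁, hc₁, hk₁⟩ := key b₁ (hk.trans inf_le_left)
      obtain ⟨c₂, hc₂, hk₂⟩ := key b₂ (hk.trans inf_le_right)
      have hc : S.prec (a ⊓ (c₁ ⊓ c₂)) (b₁ ⊓ b₂) := by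
        refine S.prec_and ?_ ?_
        · exact S.prec_wosi (inf_le_inf_left a inf_le_left) hc₁ le_rfl
        · exact S.prec_wosi (inf_le_inf_left a inf_le_right) hc₂ le_rfl
      calc sInf (C.e '' F) ≤ C.e c₁ ⊓ C.e c₂ := le_inf hk₁ hk₂
        _ = C.e (c₁ ⊓ c₂) := (C.map_inf _ _).symm
        _ ≤ slantImp C S.prec a (b₁ ⊓ b₂) := le_sSup ⟨_, hc, rfl⟩
  · apply le_antisymm le_top
    have : S.prec (a ⊓ ⊤) ⊤ := S.prec_wosi le_top S.prec_top le_rfl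
    calc (⊤ : Aδ) = C.e ⊤ := C.map_top.symm
      _ ≤ slantImp C S.prec a ⊤ := le_sSup ⟨⊤, this, rfl⟩
end

section
/- For any subordination algebra (A, ≺), the operation a ⇒_≺ b := ⋁{c ∈ A | a ∧ c ≺ b} satisfies (a₁ ∨ a₂) ⇒_≺ b = (a₁ ⇒_≺ b) ∧ (a₂ ⇒_≺ b) and ⊥ ⇒_≺ b = ⊤ for all a₁, a₂, b ∈ A. -/
lemma slantImp_key {A : Type*} [DistribLattice A] [BoundedOrder A]
    {Aδ : Type*} [CompleteLattice Aδ] (C : CanExt A Aδ) (S : SubordAlg A)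
    (a b : A) (k : Aδ) (hk : C.IsClosed k)
    (hle : k ≤ slantImp C S.prec a b) :
    ∃ c : A, S.prec (a ⊓ c) b ∧ k ≤ C.e c := by
  obtain ⟨F, hFne, rfl⟩ := hk
  have hbot : S.prec (a ⊓ (⊥ : A)) b := by
    rw [inf_bot_eq]; exact S.prec_wosi le_rfl S.prec_bot bot_le
  obtain ⟨F', I', hF', hI', hF'f, hI'f, hle'⟩ :=
    C.compact F {c | S.prec (a ⊓ c) b} hFne ⟨⊥, hbot⟩ hle
  set t := hI'f.toFinset with ht
  refine ⟨t.sup id, ?_, ?_⟩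
  · refine Finset.sup_induction (p := fun c => S.prec (a ⊓ c) b) hbot ?_ ?_
    · intro x hx y hy
      have : S.prec ((a ⊓ x) ⊔ (a ⊓ y)) b := S.prec_or hx hy
      exact S.prec_wosi (le_of_eq (inf_sup_left a x y)) this le_rfl
    · intro i hi
      have : i ∈ I' := by simpa [ht] using hi
      exact hI' this
  · calc sInf (C.e '' F) ≤ sInf (C.e '' F') := sInf_le_sInf (Set.image_mono hF')
      _ ≤ sSup (C.e '' I') := hle'
      _ ≤ C.e (t.sup id) := by
          refine sSup_le ?_
          rintro _ ⟨x, hx, rfl⟩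
          exact (C.le_iff _ _).mp (Finset.le_sup (f := id) (by simpa [ht] using hx))

theorem stmt2 {A : Type*} [DistribLattice A] [BoundedOrder A]
    {Aδ : Type*} [CompleteLattice Aδ] (C : CanExt A Aδ) (S : SubordAlg A)
    (a₁ a₂ b : A) :
    slantImp C S.prec (a₁ ⊔ a₂) b = slantImp C S.prec a₁ b ⊓ slantImp C S.prec a₂ b ∧
    slantImp C S.prec ⊥ b = ⊤ := by
  constructor
  · apply le_antisymm
    · refine sSup_le ?_
      rintro _ ⟨c, hc, rfl⟩
      have h1 : S.prec (a₁ ⊓ c) b :=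
        S.prec_wosi (inf_le_inf_right c le_sup_left) hc le_rfl
      have h2 : S.prec (a₂ ⊓ c) b :=
        S.prec_wosi (inf_le_inf_right c le_sup_right) hc le_rfl
      exact le_inf (le_sSup ⟨c, h1, rfl⟩) (le_sSup ⟨c, h2, rfl⟩)
    · set u := slantImp C S.prec a₁ b ⊓ slantImp C S.prec a₂ b with hu
      rw [C.dense_closed u]
      refine sSup_le ?_
      rintro k ⟨hkc, hku⟩
      obtain ⟨c₁, hc₁, hk₁⟩ := slantImp_key C S a₁ b k hkc (hku.trans inf_le_left)
      obtain ⟨c₂, hc₂, hk₂⟩ := slantImp_key C S a₂ b k hkc (hku.trans inf_le_right)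
      have hmem : S.prec ((a₁ ⊔ a₂) ⊓ (c₁ ⊓ c₂)) b := by
        have h1 : S.prec (a₁ ⊓ (c₁ ⊓ c₂)) b :=
          S.prec_wosi (inf_le_inf_left a₁ inf_le_left) hc₁ le_rfl
        have h2 : S.prec (a₂ ⊓ (c₁ ⊓ c₂)) b :=
          S.prec_wosi (inf_le_inf_left a₂ inf_le_right) hc₂ le_rfl
        exact S.prec_wosi (le_of_eq (inf_sup_right a₁ a₂ (c₁ ⊓ c₂)))
          (S.prec_or h1 h2) le_rfl
      calc k ≤ C.e c₁ ⊓ C.e c₂ := le_inf hk₁ hk₂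
        _ = C.e (c₁ ⊓ c₂) := (C.map_inf c₁ c₂).symm
        _ ≤ slantImp C S.prec (a₁ ⊔ a₂) b := le_sSup ⟨c₁ ⊓ c₂, hmem, rfl⟩
  · apply top_unique
    have hmem : S.prec ((⊥ : A) ⊓ (⊤ : A)) b := by
      rw [bot_inf_eq]; exact S.prec_wosi le_rfl S.prec_bot bot_le
    calc (⊤ : Aδ) = C.e ⊤ := C.map_top.symm
      _ ≤ slantImp C S.prec ⊥ b := le_sSup ⟨⊤, hmem, rfl⟩
end

section
/- For any subordination algebra (A, ≺) and a, b, c ∈ A: a ∧ c ≤ ⊤ ⇒_≺ b if and only if c ≤ a ⇒_≺ b, where a ⇒_≺ b := ⋁{c ∈ A | a ∧ c ≺ b} in the canonical extension A^δ. -/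
lemma canext_compact_ideal {A : Type*} [DistribLattice A] [BoundedOrder A]
    {Aδ : Type*} [CompleteLattice Aδ] (C : CanExt A Aδ)
    (I : Set A) (hbot : (⊥ : A) ∈ I) (hsup : ∀ x ∈ I, ∀ y ∈ I, x ⊔ y ∈ I)
    (x : A) (h : C.e x ≤ sSup (C.e '' I)) : ∃ d ∈ I, x ≤ d := by
  obtain ⟨F', I', hF, hI, hFfin, hIfin, hle⟩ :=
    C.compact {x} I ⟨x, rfl⟩ ⟨⊥, hbot⟩ (by simpa using h)
  have hex : C.e x ≤ sSup (C.e '' I') := by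
    calc C.e x = sInf (C.e '' {x}) := by simp
    _ ≤ sInf (C.e '' F') := sInf_le_sInf (Set.image_mono hF)
    _ ≤ sSup (C.e '' I') := hle
  have hbound : ∀ (J : Set A), J.Finite → J ⊆ I → ∃ d ∈ I, ∀ y ∈ J, y ≤ d := by
    intro J hJ
    refine Set.Finite.induction_on (motive := fun J _ => J ⊆ I → ∃ d ∈ I, ∀ y ∈ J, y ≤ d) J hJ (fun _ => ⟨⊥, hbot, by simp⟩) ?_
    intro u J' _ _ ih hsub
    obtain ⟨d, hdI, hd⟩ := ih (fun y hy => hsub (Set.mem_insert_of_mem _ hy))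
    refine ⟨u ⊔ d, hsup u (hsub (Set.mem_insert _ _)) d hdI, ?_⟩
    rintro y (rfl | hy)
    · exact le_sup_left
    · exact (hd y hy).trans le_sup_right
  obtain ⟨d, hdI, hd⟩ := hbound I' hIfin hI
  refine ⟨d, hdI, (C.le_iff x d).2 (hex.trans (sSup_le ?_))⟩
  rintro _ ⟨y, hy, rfl⟩
  exact (C.le_iff y d).1 (hd y hy)

theorem stmt3 {A : Type*} [DistribLattice A] [BoundedOrder A]
    {Aδ : Type*} [CompleteLattice Aδ] (C : CanExt A Aδ) (S : SubordAlg A)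
    (a b c : A) :
    C.e (a ⊓ c) ≤ slantImp C S.prec ⊤ b ↔ C.e c ≤ slantImp C S.prec a b := by
  unfold slantImp
  constructor
  · intro h
    obtain ⟨d, hd, hled⟩ := canext_compact_ideal C {c | S.prec (⊤ ⊓ c) b}
      (S.prec_wosi (by simp) S.prec_bot bot_le)
      (fun x hx y hy => S.prec_wosi (by simp [inf_sup_left])
        (S.prec_or (c := b) hx hy) le_rfl) _ h
    refine le_sSup ⟨c, ?_, rfl⟩
    exact S.prec_wosi (le_inf le_top hled) hd le_rfl
  · intro h
    obtain ⟨d, hd, hled⟩ := canext_compact_ideal C {c | S.prec (a ⊓ c) b}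
      (S.prec_wosi (by simp) S.prec_bot bot_le)
      (fun x hx y hy => S.prec_wosi (by simp [inf_sup_left])
        (S.prec_or (c := b) hx hy) le_rfl) _ h
    refine le_sSup ⟨a ⊓ c, ?_, rfl⟩
    exact S.prec_wosi (inf_le_of_right_le (inf_le_inf_left a hled)) hd le_rfl
end

section
/- Let (A, ⇒) be a slanted Heyting algebra. Define a ≺_⇒ b iff a ≤ ⊤ ⇒ b. Then (A, ≺_⇒) is a subordination algebra: ≺_⇒ satisfies (⊥-⊤), (AND), (OR), and (WO-SI). -/
theorem stmt4 {A : Type*} [DistribLattice A] [BoundedOrder A]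
    {Aδ : Type*} [CompleteLattice Aδ] (C : CanExt A Aδ)
    (H : SlantedHeyting A Aδ C) :
    (C.e (⊥ : A) ≤ H.imp ⊤ ⊥) ∧
    (C.e (⊤ : A) ≤ H.imp ⊤ ⊤) ∧
    (∀ a b c : A, C.e a ≤ H.imp ⊤ b → C.e a ≤ H.imp ⊤ c → C.e a ≤ H.imp ⊤ (b ⊓ c)) ∧
    (∀ a b c : A, C.e a ≤ H.imp ⊤ c → C.e b ≤ H.imp ⊤ c → C.e (a ⊔ b) ≤ H.imp ⊤ c) ∧
    (∀ a b c d : A, a ≤ b → C.e b ≤ H.imp ⊤ c → c ≤ d → C.e a ≤ H.imp ⊤ d) := by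
  refine ⟨?_, ?_, ?_, ?_, ?_⟩
  · rw [C.map_bot]; exact bot_le
  · rw [H.imp_top]; exact le_top
  · intro a b c hb hc
    rw [H.imp_inf]; exact le_inf hb hc
  · intro a b c ha hb
    rw [C.map_sup]; exact sup_le ha hb
  · intro a b c d hab hbc hcd
    have h1 : C.e a ≤ C.e b := (C.le_iff a b).mp hab
    have h2 : H.imp ⊤ c ≤ H.imp ⊤ d := by
      have : H.imp ⊤ (c ⊓ d) = H.imp ⊤ c ⊓ H.imp ⊤ d := H.imp_inf ⊤ c d
      rw [inf_eq_left.mpr hcd] at this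
      rw [this]; exact inf_le_right
    exact h1.trans (hbc.trans h2)
end

section
/- The correspondences between subordination algebras and slanted Heyting algebras are mutually inverse: for any subordination algebra (A, ≺), the relation ≺_{⇒_≺} defined by a ≺_{⇒_≺} b iff a ≤ ⊤ ⇒_≺ b coincides with ≺; and for any slanted Heyting algebra (A, ⇒), the operation ⇒_{≺_⇒} defined from the relation a ≺_⇒ b iff a ≤ ⊤ ⇒ b coincides with ⇒. -/
theorem stmt5 {A : Type*} [DistribLattice A] [BoundedOrder A]
    {Aδ : Type*} [CompleteLattice Aδ] (C : CanExt A Aδ) :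
    (∀ S : SubordAlg A, ∀ a b : A,
      (C.e a ≤ slantImp C S.prec ⊤ b ↔ S.prec a b)) ∧
    (∀ H : SlantedHeyting A Aδ C, ∀ a b : A,
      slantImp C (fun x y => C.e x ≤ H.imp ⊤ y) a b = H.imp a b) := by
  constructor
  · intro S a b
    constructor
    · intro h
      have hS : (setOf fun c => S.prec (⊤ ⊓ c) b).Nonempty := by
        refine ⟨⊥, ?_⟩
        exact S.prec_wosi (le_refl _) (S.prec_wosi inf_le_right S.prec_bot bot_le) (le_refl _)
      have hcomp := C.compact {a} _ (Set.singleton_nonempty a) hS ?_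
      · obtain ⟨F', I', hF', hI', hFfin, hIfin, hle⟩ := hcomp
        set c₀ : A := hIfin.toFinset.sup id with hc₀
        have h1 : C.e a ≤ sInf (C.e '' F') := by
          refine le_sInf ?_
          rintro x ⟨a', ha', rfl⟩
          have : a' = a := hF' ha'
          rw [this]
        have h2 : sSup (C.e '' I') ≤ C.e c₀ := by
          refine sSup_le ?_
          rintro x ⟨c, hc, rfl⟩
          refine (C.le_iff _ _).mp ?_
          exact Finset.le_sup (f := id) (hIfin.mem_toFinset.mpr hc)
        have hpc : S.prec c₀ b := by
          refine Finset.sup_induction (p := fun c => S.prec c b) ?_ (fun x hx y hy => S.prec_or hx hy) ?_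
          · exact S.prec_wosi (le_refl _) S.prec_bot bot_le
          · intro c hc
            have hcI : c ∈ I' := hIfin.mem_toFinset.mp hc
            have := hI' hcI
            exact S.prec_wosi (le_inf le_top (le_refl c)) this (le_refl b)
        have : a ≤ c₀ := (C.le_iff _ _).mpr (h1.trans (hle.trans h2))
        exact S.prec_wosi this hpc (le_refl b)
      · calc sInf (C.e '' {a}) = C.e a := by simp
          _ ≤ _ := h
    · intro h
      refine le_sSup ?_
      exact ⟨a, S.prec_wosi inf_le_right h (le_refl b), rfl⟩
  · intro H a b
    apply le_antisymm
    · refine sSup_le ?_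
      rintro x ⟨c, hc, rfl⟩
      exact (H.resid a b c).mpr hc
    · obtain ⟨I, hI, hIeq⟩ := H.imp_open a b
      rw [hIeq]
      refine sSup_le ?_
      rintro x ⟨c, hc, rfl⟩
      refine le_sSup ⟨c, ?_, rfl⟩
      exact (H.resid a b c).mp (hIeq ▸ le_sSup ⟨c, hc, rfl⟩)
end

section
/- Let (A, ⇒) be a slanted Heyting algebra with canonical extension (A^δ, ⇒^π). For all closed elements k, k' and open element o of A^δ: k ≤ k' ⇒^π o if and only if there exist a, b, c ∈ A with a ≤ c ⇒ b, k ≤ a, k' ≤ c, and b ≤ o. -/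
section Aux

variable {A : Type*} [DistribLattice A] [BoundedOrder A]
    {Aδ : Type*} [CompleteLattice Aδ] {C : CanExt A Aδ}

lemma imp_anti (H : SlantedHeyting A Aδ C) {a a' : A} (b : A) (h : a' ≤ a) :
    H.imp a b ≤ H.imp a' b := by
  have h2 := H.sup_imp a a' b
  rw [sup_eq_left.mpr h] at h2
  exact h2 ▸ inf_le_right

lemma imp_mono (H : SlantedHeyting A Aδ C) (a : A) {b b' : A} (h : b ≤ b') :
    H.imp a b ≤ H.imp a b' := by
  have h2 := H.imp_inf a b b'
  rw [inf_eq_left.mpr h] at h2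
  exact h2 ▸ inf_le_right

lemma e_inf'' {ι : Type*} (s : Finset ι) (h : s.Nonempty) (f : ι → A) :
    C.e (s.inf' h f) = s.inf' h (fun i => C.e (f i)) := by
  induction h using Finset.Nonempty.cons_induction with
  | singleton a => simp
  | cons a s ha hs ih => rw [Finset.inf'_cons, Finset.inf'_cons, C.map_inf, ih]; exact hs

lemma e_sup'' {ι : Type*} (s : Finset ι) (h : s.Nonempty) (f : ι → A) :
    C.e (s.sup' h f) = s.sup' h (fun i => C.e (f i)) := by
  induction h using Finset.Nonempty.cons_induction with
  | singleton a => simp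
  | cons a s ha hs ih => rw [Finset.sup'_cons, Finset.sup'_cons, C.map_sup, ih]; exact hs

lemma e_inf' (Fs : Finset A) (h : Fs.Nonempty) :
    C.e (Fs.inf' h id) = sInf (C.e '' ↑Fs) := by
  rw [e_inf'', Finset.inf'_eq_csInf_image]; rfl

end Aux

theorem stmt7 {A : Type*} [DistribLattice A] [BoundedOrder A]
    {Aδ : Type*} [CompleteLattice Aδ] {C : CanExt A Aδ}
    (H : SlantedHeyting A Aδ C) (k k' o : Aδ)
    (hk : C.IsClosed k) (hk' : C.IsClosed k') (ho : C.IsOpen o) :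
    k ≤ impPiKO H k' o ↔
      ∃ a b c : A, C.e a ≤ H.imp c b ∧ k ≤ C.e a ∧ k' ≤ C.e c ∧ C.e b ≤ o := by
  constructor
  · intro hle
    obtain ⟨F, hFne, hkF⟩ := hk
    obtain ⟨F', hF'ne, hk'F⟩ := hk'
    obtain ⟨I, hIne, hoI⟩ := ho
    -- the set of "generators"
    set T : Set A := {t | ∃ a b : A, C.e t ≤ H.imp a b ∧ k' ≤ C.e a ∧ C.e b ≤ o} with hT
    have hTne : T.Nonempty := by
      obtain ⟨a0, ha0⟩ := hF'ne
      obtain ⟨b0, hb0⟩ := hIne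
      obtain ⟨J, hJne, hJ⟩ := H.imp_open a0 b0
      obtain ⟨j, hj⟩ := hJne
      refine ⟨j, a0, b0, ?_, ?_, ?_⟩
      · rw [hJ]; exact le_sSup ⟨j, hj, rfl⟩
      · rw [hk'F]; exact sInf_le ⟨a0, ha0, rfl⟩
      · rw [hoI]; exact le_sSup ⟨b0, hb0, rfl⟩
    have hmain : sInf (C.e '' F) ≤ sSup (C.e '' T) := by
      rw [← hkF]
      refine hle.trans (sSup_le ?_)
      rintro u ⟨a, b, rfl, hka, hbo⟩
      obtain ⟨J, hJne, hJ⟩ := H.imp_open a b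
      rw [hJ]
      refine sSup_le ?_
      rintro v ⟨j, hj, rfl⟩
      refine le_sSup ⟨j, ⟨a, b, ?_, hka, hbo⟩, rfl⟩
      rw [hJ]; exact le_sSup ⟨j, hj, rfl⟩
    obtain ⟨F0, T0, hF0, hT0, hF0fin, hT0fin, hcpt⟩ := C.compact F T hFne hTne hmain
    obtain ⟨f0, hf0⟩ := hFne
    obtain ⟨t0, ht0⟩ := hTne
    set F1 : Set A := insert f0 F0 with hF1
    set T1 : Set A := insert t0 T0 with hT1
    have hF1fin : F1.Finite := hF0fin.insert f0
    have hT1fin : T1.Finite := hT0fin.insert t0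
    have hF1sub : F1 ⊆ F := Set.insert_subset hf0 hF0
    have hT1sub : T1 ⊆ T := Set.insert_subset ht0 hT0
    have hcpt1 : sInf (C.e '' F1) ≤ sSup (C.e '' T1) := by
      calc sInf (C.e '' F1) ≤ sInf (C.e '' F0) :=
            sInf_le_sInf (Set.image_mono (Set.subset_insert _ _))
        _ ≤ sSup (C.e '' T0) := hcpt
        _ ≤ sSup (C.e '' T1) := sSup_le_sSup (Set.image_mono (Set.subset_insert _ _))
    set Fs := hF1fin.toFinset with hFs
    set Ts := hT1fin.toFinset with hTs
    have hFsne : Fs.Nonempty := by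
      rw [hFs]; simp [hF1]
    have hTsne : Ts.Nonempty := by
      rw [hTs]; simp [hT1]
    have hFscoe : (↑Fs : Set A) = F1 := hF1fin.coe_toFinset
    have hTscoe : (↑Ts : Set A) = T1 := hT1fin.coe_toFinset
    -- choose witnesses for each element of Ts
    have hch : ∀ t ∈ Ts, ∃ ab : A × A, C.e t ≤ H.imp ab.1 ab.2 ∧ k' ≤ C.e ab.1 ∧ C.e ab.2 ≤ o := by
      intro t ht
      have : t ∈ T := hT1sub (by rwa [← hTscoe])
      obtain ⟨a, b, h1, h2, h3⟩ := this
      exact ⟨(a, b), h1, h2, h3⟩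
    choose! w hw1 hw2 hw3 using hch
    refine ⟨Fs.inf' hFsne id, Ts.sup' hTsne (fun t => (w t).2),
      Ts.inf' hTsne (fun t => (w t).1), ?_, ?_, ?_, ?_⟩
    · -- e a ≤ imp c b
      rw [e_inf', hFscoe]
      refine hcpt1.trans (sSup_le ?_)
      rintro v ⟨t, ht, rfl⟩
      have htTs : t ∈ Ts := by rw [← hTscoe] at ht; exact ht
      refine (hw1 t htTs).trans ?_
      have h1 : H.imp (w t).1 (w t).2 ≤
          H.imp (Ts.inf' hTsne fun t => (w t).1) (w t).2 :=
        imp_anti H (w t).2 (Finset.inf'_le (fun t => (w t).1) htTs)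
      have h2 : H.imp (Ts.inf' hTsne fun t => (w t).1) (w t).2 ≤
          H.imp (Ts.inf' hTsne fun t => (w t).1) (Ts.sup' hTsne fun t => (w t).2) :=
        imp_mono H _ (Finset.le_sup' (fun t => (w t).2) htTs)
      exact h1.trans h2
    · -- k ≤ e a
      rw [hkF, e_inf', hFscoe]
      exact sInf_le_sInf (Set.image_mono hF1sub)
    · -- k' ≤ e c
      rw [e_inf'', Finset.le_inf'_iff]
      intro t ht
      exact hw2 t ht
    · -- e b ≤ o
      rw [e_sup'', Finset.sup'_le_iff]
      intro t ht
      exact hw3 t ht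
  · rintro ⟨a, b, c, hab, hka, hk'c, hbo⟩
    refine hka.trans (hab.trans ?_)
    exact le_sSup ⟨c, b, rfl, hk'c, hbo⟩
end

section
/- Let (A, ⇒) be a slanted Heyting algebra with π-extension ⇒^π on A^δ. For all closed elements k, k' and open element o of A^δ: k ≤ k' ⇒^π o if and only if k ∧ k' ≤ ⊤ ⇒^π o. -/
section Aux
variable {A : Type*} [DistribLattice A] [BoundedOrder A]
    {Aδ : Type*} [CompleteLattice Aδ] {C : CanExt A Aδ}

lemma CanExt.exists_inf (C : CanExt A Aδ) {S : Set A} (hS : S.Finite) :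
    ∃ f : A, C.e f = sInf (C.e '' S) := by
  refine Set.Finite.induction_on S hS ⟨⊤, by simp [C.map_top]⟩ ?_
  intro a s _ _ ih
  obtain ⟨f, hf⟩ := ih
  exact ⟨a ⊓ f, by rw [C.map_inf, hf, Set.image_insert_eq, sInf_insert]⟩

lemma CanExt.exists_sup (C : CanExt A Aδ) {S : Set A} (hS : S.Finite) :
    ∃ c : A, C.e c = sSup (C.e '' S) := by
  refine Set.Finite.induction_on S hS ⟨⊥, by simp [C.map_bot]⟩ ?_
  intro a s _ _ ih
  obtain ⟨f, hf⟩ := ih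
  exact ⟨a ⊔ f, by rw [C.map_sup, hf, Set.image_insert_eq, sSup_insert]⟩

lemma slanted_imp_anti (H : SlantedHeyting A Aδ C) {a₁ a₂ : A} (h : a₁ ≤ a₂) (b : A) :
    H.imp a₂ b ≤ H.imp a₁ b := by
  have h2 := H.sup_imp a₁ a₂ b
  rw [sup_eq_right.mpr h] at h2
  rw [h2]; exact inf_le_left

lemma slanted_imp_mono (H : SlantedHeyting A Aδ C) (a : A) {b₁ b₂ : A} (h : b₁ ≤ b₂) :
    H.imp a b₁ ≤ H.imp a b₂ := by
  have h2 := H.imp_inf a b₁ b₂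
  rw [inf_eq_left.mpr h] at h2
  rw [h2]; exact inf_le_right

lemma exists_upper (C : CanExt A Aδ) {S : Set Aδ} (hS : S.Nonempty)
    (hdir : ∀ u ∈ S, ∀ v ∈ S, ∃ w ∈ S, u ≤ w ∧ v ≤ w) :
    ∀ {J₀ : Set A}, J₀.Finite → (∀ j ∈ J₀, ∃ u ∈ S, C.e j ≤ u) →
      ∃ w ∈ S, ∀ j ∈ J₀, C.e j ≤ w := by
  intro J₀ hfin
  refine Set.Finite.induction_on J₀ hfin ?_ ?_
  · intro _
    obtain ⟨u, hu⟩ := hS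
    exact ⟨u, hu, by simp⟩
  · intro a s _ _ ih hsub
    obtain ⟨w, hw, hwle⟩ := ih (fun j hj => hsub j (Set.mem_insert_of_mem a hj))
    obtain ⟨u, hu, hau⟩ := hsub a (Set.mem_insert a s)
    obtain ⟨w', hw', huw', hww'⟩ := hdir u hu w hw
    refine ⟨w', hw', ?_⟩
    rintro j (rfl | hj)
    · exact hau.trans huw'
    · exact (hwle j hj).trans hww'

/-- A closed element below a directed nonempty join of opens is below one of them. -/
lemma closed_le_sSup (C : CanExt A Aδ) {k : Aδ} (hk : C.IsClosed k) {S : Set Aδ}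
    (hS : S.Nonempty) (hopen : ∀ u ∈ S, C.IsOpen u)
    (hdir : ∀ u ∈ S, ∀ v ∈ S, ∃ w ∈ S, u ≤ w ∧ v ≤ w)
    (h : k ≤ sSup S) : ∃ u ∈ S, k ≤ u := by
  obtain ⟨F, hFne, rfl⟩ := hk
  set J : Set A := {j | ∃ u ∈ S, C.e j ≤ u} with hJdef
  have hSsup : sSup S ≤ sSup (C.e '' J) := by
    apply sSup_le; intro u hu
    obtain ⟨I, hIne, hIe⟩ := hopen u hu
    rw [hIe]
    apply sSup_le; rintro _ ⟨i, hi, rfl⟩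
    exact le_sSup ⟨i, ⟨u, hu, hIe ▸ le_sSup ⟨i, hi, rfl⟩⟩, rfl⟩
  have hJne : J.Nonempty := by
    obtain ⟨u, hu⟩ := hS
    obtain ⟨I, ⟨i, hi⟩, hIe⟩ := hopen u hu
    exact ⟨i, u, hu, by rw [hIe]; exact le_sSup ⟨i, hi, rfl⟩⟩
  obtain ⟨F₀, J₀, hF₀, hJ₀, hF₀f, hJ₀f, hle⟩ :=
    C.compact F J hFne hJne (h.trans hSsup)
  obtain ⟨w, hw, hwle⟩ := exists_upper C hS hdir hJ₀f (fun j hj => hJ₀ hj)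
  refine ⟨w, hw, ?_⟩
  calc sInf (C.e '' F) ≤ sInf (C.e '' F₀) := sInf_le_sInf (Set.image_mono hF₀)
    _ ≤ sSup (C.e '' J₀) := hle
    _ ≤ w := sSup_le (by rintro _ ⟨j, hj, rfl⟩; exact hwle j hj)

lemma closed_le_open (C : CanExt A Aδ) {k v : Aδ} (hk : C.IsClosed k) (hv : C.IsOpen v)
    (h : k ≤ v) : ∃ c : A, k ≤ C.e c ∧ C.e c ≤ v := by
  obtain ⟨F, hFne, rfl⟩ := hk
  obtain ⟨I, hIne, rfl⟩ := hv
  obtain ⟨F₀, I₀, hF₀, hI₀, hF₀f, hI₀f, hle⟩ := C.compact F I hFne hIne h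
  obtain ⟨c, hc⟩ := C.exists_sup hI₀f
  refine ⟨c, ?_, ?_⟩
  · rw [hc]; exact (sInf_le_sInf (Set.image_mono hF₀)).trans hle
  · rw [hc]; exact sSup_le_sSup (Set.image_mono hI₀)

end Aux

theorem stmt8 {A : Type*} [DistribLattice A] [BoundedOrder A]
    {Aδ : Type*} [CompleteLattice Aδ] {C : CanExt A Aδ}
    (H : SlantedHeyting A Aδ C) (k k' o : Aδ)
    (hk : C.IsClosed k) (hk' : C.IsClosed k') (ho : C.IsOpen o) :
    k ≤ impPiKO H k' o ↔ k ⊓ k' ≤ impPiKO H ⊤ o := by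
  obtain ⟨I, ⟨b₀, hb₀⟩, hoI⟩ := ho
  have hb₀o : C.e b₀ ≤ o := by rw [hoI]; exact le_sSup ⟨b₀, hb₀, rfl⟩
  constructor
  · intro h
    set S : Set Aδ := {u | ∃ a b : A, u = H.imp a b ∧ k' ≤ C.e a ∧ C.e b ≤ o} with hSdef
    have hSne : S.Nonempty :=
      ⟨H.imp ⊤ b₀, ⊤, b₀, rfl, by rw [C.map_top]; exact le_top, hb₀o⟩
    have hSopen : ∀ u ∈ S, C.IsOpen u := by
      rintro u ⟨a, b, rfl, -, -⟩; exact H.imp_open a b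
    have hSdir : ∀ u ∈ S, ∀ v ∈ S, ∃ w ∈ S, u ≤ w ∧ v ≤ w := by
      rintro u ⟨a₁, b₁, rfl, ha₁, hb₁⟩ v ⟨a₂, b₂, rfl, ha₂, hb₂⟩
      refine ⟨H.imp (a₁ ⊓ a₂) (b₁ ⊔ b₂),
        ⟨a₁ ⊓ a₂, b₁ ⊔ b₂, rfl, by rw [C.map_inf]; exact le_inf ha₁ ha₂,
          by rw [C.map_sup]; exact sup_le hb₁ hb₂⟩, ?_, ?_⟩
      · exact (slanted_imp_anti H inf_le_left b₁).trans
          (slanted_imp_mono H _ le_sup_left)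
      · exact (slanted_imp_anti H inf_le_right b₂).trans
          (slanted_imp_mono H _ le_sup_right)
    obtain ⟨u, ⟨a, b, rfl, ha, hb⟩, hku⟩ :=
      closed_le_sSup C hk hSne hSopen hSdir (show k ≤ sSup S from h)
    obtain ⟨c, hkc, hcb⟩ := closed_le_open C hk (H.imp_open a b) hku
    have hres : C.e (a ⊓ c) ≤ H.imp ⊤ b := (H.resid a b c).mp hcb
    have hkk' : k ⊓ k' ≤ C.e (a ⊓ c) := by
      rw [C.map_inf]
      exact le_inf (inf_le_right.trans ha) (inf_le_left.trans hkc)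
    exact hkk'.trans (hres.trans (le_sSup ⟨⊤, b, rfl, by rw [C.map_top], hb⟩))
  · intro h
    obtain ⟨F, hFne, hkF⟩ := hk
    obtain ⟨F', hF'ne, hk'F⟩ := hk'
    have hinf : k ⊓ k' = sInf (C.e '' (F ∪ F')) := by
      rw [Set.image_union, sInf_union, hkF, hk'F]
    set S : Set Aδ := {u | ∃ a b : A, u = H.imp a b ∧ (⊤ : Aδ) ≤ C.e a ∧ C.e b ≤ o}
      with hSdef
    have hSne : S.Nonempty := ⟨H.imp ⊤ b₀, ⊤, b₀, rfl, by rw [C.map_top], hb₀o⟩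
    have hSopen : ∀ u ∈ S, C.IsOpen u := by
      rintro u ⟨a, b, rfl, -, -⟩; exact H.imp_open a b
    have hSdir : ∀ u ∈ S, ∀ v ∈ S, ∃ w ∈ S, u ≤ w ∧ v ≤ w := by
      rintro u ⟨a₁, b₁, rfl, ha₁, hb₁⟩ v ⟨a₂, b₂, rfl, ha₂, hb₂⟩
      refine ⟨H.imp (a₁ ⊓ a₂) (b₁ ⊔ b₂),
        ⟨a₁ ⊓ a₂, b₁ ⊔ b₂, rfl, by rw [C.map_inf]; exact le_inf ha₁ ha₂,
          by rw [C.map_sup]; exact sup_le hb₁ hb₂⟩, ?_, ?_⟩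
      · exact (slanted_imp_anti H inf_le_left b₁).trans
          (slanted_imp_mono H _ le_sup_left)
      · exact (slanted_imp_anti H inf_le_right b₂).trans
          (slanted_imp_mono H _ le_sup_right)
    have hclosed : C.IsClosed (k ⊓ k') :=
      ⟨F ∪ F', hFne.mono Set.subset_union_left, hinf⟩
    obtain ⟨u, ⟨a, b, rfl, ha, hb⟩, hku⟩ :=
      closed_le_sSup C hclosed hSne hSopen hSdir (show k ⊓ k' ≤ sSup S from h)
    have haT : a = ⊤ := top_unique ((C.le_iff ⊤ a).mpr (by rw [C.map_top]; exact ha))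
    subst haT
    obtain ⟨J, hJne, hJe⟩ := H.imp_open ⊤ b
    rw [hinf, hJe] at hku
    obtain ⟨F₀, J₀, hF₀, hJ₀, hF₀f, hJ₀f, hle⟩ :=
      C.compact (F ∪ F') J (hFne.mono Set.subset_union_left) hJne hku
    obtain ⟨f, hf⟩ := C.exists_inf (hF₀f.inter_of_left F)
    obtain ⟨f', hf'⟩ := C.exists_inf (hF₀f.inter_of_left F')
    obtain ⟨c, hc⟩ := C.exists_sup hJ₀f
    have hkf : k ≤ C.e f := by
      rw [hf, hkF]; exact sInf_le_sInf (Set.image_mono Set.inter_subset_right)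
    have hk'f' : k' ≤ C.e f' := by
      rw [hf', hk'F]; exact sInf_le_sInf (Set.image_mono Set.inter_subset_right)
    have hsplit : (F₀ ∩ F') ∪ (F₀ ∩ F) = F₀ := by
      rw [← Set.inter_union_distrib_left, Set.union_comm F' F,
        Set.inter_eq_left.mpr hF₀]
    have hres : C.e f ≤ H.imp f' b := by
      apply (H.resid f' b f).mpr
      have h1 : C.e (f' ⊓ f) = sInf (C.e '' F₀) := by
        rw [C.map_inf, hf', hf, ← sInf_union, ← Set.image_union, hsplit]
      have h2 : C.e c ≤ H.imp ⊤ b := by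
        rw [hc, hJe]; exact sSup_le_sSup (Set.image_mono hJ₀)
      rw [h1]
      exact (le_of_le_of_eq hle hc.symm).trans h2
    exact hkf.trans (hres.trans (le_sSup ⟨f', b, rfl, hk'f', hb⟩))
end

section
/- Let (A, ⩾) be a slanted co-Heyting algebra. Define a ≺_⩾ b iff ⊥ ⩾ a ≤ b. Then (A, ≺_⩾) is a subordination algebra. -/
theorem stmt11 {A : Type*} [DistribLattice A] [BoundedOrder A]
    {Aδ : Type*} [CompleteLattice Aδ] (C : CanExt A Aδ)
    (H : SlantedCoHeyting A Aδ C) :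
    (H.coimp ⊥ ⊥ ≤ C.e (⊥ : A)) ∧
    (H.coimp ⊥ ⊤ ≤ C.e (⊤ : A)) ∧
    (∀ a b c : A, H.coimp ⊥ a ≤ C.e b → H.coimp ⊥ a ≤ C.e c →
      H.coimp ⊥ a ≤ C.e (b ⊓ c)) ∧
    (∀ a b c : A, H.coimp ⊥ a ≤ C.e c → H.coimp ⊥ b ≤ C.e c →
      H.coimp ⊥ (a ⊔ b) ≤ C.e c) ∧
    (∀ a b c d : A, a ≤ b → H.coimp ⊥ b ≤ C.e c → c ≤ d →
      H.coimp ⊥ a ≤ C.e d) := by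
  
  refine ⟨?_, ?_, ?_, ?_, ?_⟩
  · rw [H.coimp_bot]; exact bot_le
  · rw [C.map_top]; exact le_top
  · intro a b c h1 h2
    rw [C.map_inf]; exact le_inf h1 h2
  · intro a b c h1 h2
    rw [H.coimp_sup]; exact sup_le h1 h2
  · intro a b c d hab hbc hcd
    have h1 : H.coimp ⊥ a ≤ H.coimp ⊥ b := by
      have : H.coimp ⊥ b = H.coimp ⊥ a ⊔ H.coimp ⊥ b := by
        rw [← H.coimp_sup, sup_eq_right.mpr hab]
      rw [this]; exact le_sup_left
    exact h1.trans (hbc.trans ((C.le_iff c d).mp hcd))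
end

section
/- Let (A, ≺) be a subordination algebra and define ¬a := ⋁{c ∈ A | a ∧ c ≺ ⊥} and ∼a := ⋀{c ∈ A | ⊤ ≺ a ∨ c} in the canonical extension A^δ. Then for all a, b ∈ A: a ≤ ¬b iff b ≤ ¬a, and ∼a ≤ b iff ∼b ≤ a. -/
lemma key_neg {A : Type*} [DistribLattice A] [BoundedOrder A]
    {Aδ : Type*} [CompleteLattice Aδ] (C : CanExt A Aδ) (S : SubordAlg A)
    (a b : A) : C.e a ≤ slantNeg C S.prec b ↔ S.prec (a ⊓ b) ⊥ := by
  classical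
  constructor
  · intro h
    obtain ⟨F', I', hF', hI', hFfin, hIfin, hle⟩ :=
      C.compact {a} {c | S.prec (b ⊓ c) ⊥} ⟨a, rfl⟩
        ⟨⊥, S.prec_wosi inf_le_right S.prec_bot le_rfl⟩
        (by simpa [slantNeg] using h)
    have hea : C.e a ≤ sSup (C.e '' I') := by
      refine le_trans (le_trans ?_ (sInf_le_sInf (Set.image_mono hF'))) hle
      simp
    set s : Finset A := hIfin.toFinset with hs
    have hsI : ∀ c ∈ s, S.prec (b ⊓ c) ⊥ := by
      intro c hc
      exact hI' (by simpa [hs] using hc)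
    have himg : C.e '' I' = ↑(s.image C.e) := by
      simp [hs, Set.Finite.coe_toFinset]
    have hsup : sSup (C.e '' I') = s.sup C.e := by
      rw [himg, ← Finset.sup_id_eq_sSup, Finset.sup_image]
      rfl
    have hcomp : s.sup C.e = C.e (s.sup id) := by
      rw [Finset.comp_sup_eq_sup_comp C.e (fun x y => C.map_sup x y) C.map_bot]
      rfl
    have hab : a ≤ s.sup id := by
      rw [C.le_iff]
      calc C.e a ≤ sSup (C.e '' I') := hea
        _ = C.e (s.sup id) := by rw [hsup, hcomp]
    have hprec : ∀ t : Finset A, (∀ c ∈ t, S.prec (b ⊓ c) ⊥) →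
        S.prec (b ⊓ t.sup id) ⊥ := by
      intro t
      induction t using Finset.induction with
      | empty => intro _; exact S.prec_wosi (by simp) S.prec_bot le_rfl
      | insert c t' hx ih =>
        intro hmem
        have h1 : S.prec (b ⊓ c) ⊥ := hmem c (Finset.mem_insert_self c t')
        have h2 : S.prec (b ⊓ t'.sup id) ⊥ :=
          ih (fun d hd => hmem d (Finset.mem_insert_of_mem hd))
        have : S.prec ((b ⊓ c) ⊔ (b ⊓ t'.sup id)) ⊥ := S.prec_or h1 h2
        refine S.prec_wosi ?_ this le_rfl
        rw [Finset.sup_insert, inf_sup_left]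
        rfl
    refine S.prec_wosi ?_ (hprec s hsI) le_rfl
    exact le_inf (inf_le_right.trans le_rfl) (inf_le_left.trans hab) |>.trans
      (by rw [inf_comm])
  · intro h
    refine le_sSup ?_
    exact ⟨a, by simpa [inf_comm] using h, rfl⟩

lemma key_sim {A : Type*} [DistribLattice A] [BoundedOrder A]
    {Aδ : Type*} [CompleteLattice Aδ] (C : CanExt A Aδ) (S : SubordAlg A)
    (a b : A) : slantSim C S.prec a ≤ C.e b ↔ S.prec ⊤ (a ⊔ b) := by
  classical
  constructor
  · intro h
    obtain ⟨F', I', hF', hI', hFfin, hIfin, hle⟩ :=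
      C.compact {c | S.prec ⊤ (a ⊔ c)} {b}
        ⟨⊤, S.prec_wosi le_rfl S.prec_top le_sup_right⟩ ⟨b, rfl⟩
        (by simpa [slantSim] using h)
    have heb : sInf (C.e '' F') ≤ C.e b := by
      refine le_trans hle (le_trans (sSup_le_sSup (Set.image_mono hI')) ?_)
      simp
    set s : Finset A := hFfin.toFinset with hs
    have hsF : ∀ c ∈ s, S.prec ⊤ (a ⊔ c) := by
      intro c hc
      exact hF' (by simpa [hs] using hc)
    have himg : C.e '' F' = ↑(s.image C.e) := by
      simp [hs, Set.Finite.coe_toFinset]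
    have hinf : sInf (C.e '' F') = s.inf C.e := by
      rw [himg, ← Finset.inf_id_eq_sInf, Finset.inf_image]
      rfl
    have hcomp : s.inf C.e = C.e (s.inf id) := by
      rw [Finset.comp_inf_eq_inf_comp C.e (fun x y => C.map_inf x y) C.map_top]
      rfl
    have hab : s.inf id ≤ b := by
      rw [C.le_iff]
      calc C.e (s.inf id) = sInf (C.e '' F') := by rw [hinf, hcomp]
        _ ≤ C.e b := heb
    have hprec : ∀ t : Finset A, (∀ c ∈ t, S.prec ⊤ (a ⊔ c)) →
        S.prec ⊤ (a ⊔ t.inf id) := by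
      intro t
      induction t using Finset.induction with
      | empty => intro _; exact S.prec_wosi le_rfl S.prec_top (by simp)
      | insert c t' hx ih =>
        intro hmem
        have h1 : S.prec ⊤ (a ⊔ c) := hmem c (Finset.mem_insert_self c t')
        have h2 : S.prec ⊤ (a ⊔ t'.inf id) :=
          ih (fun d hd => hmem d (Finset.mem_insert_of_mem hd))
        have : S.prec ⊤ ((a ⊔ c) ⊓ (a ⊔ t'.inf id)) := S.prec_and h1 h2
        refine S.prec_wosi le_rfl this ?_
        rw [Finset.inf_insert, sup_inf_left]
        rfl
    exact S.prec_wosi le_rfl (hprec s hsF) (sup_le_sup_left hab a)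
  · intro h
    exact sInf_le ⟨b, h, rfl⟩

theorem stmt12 {A : Type*} [DistribLattice A] [BoundedOrder A]
    {Aδ : Type*} [CompleteLattice Aδ] (C : CanExt A Aδ) (S : SubordAlg A)
    (a b : A) :
    (C.e a ≤ slantNeg C S.prec b ↔ C.e b ≤ slantNeg C S.prec a) ∧
    (slantSim C S.prec a ≤ C.e b ↔ slantSim C S.prec b ≤ C.e a) := by
  constructor
  · rw [key_neg, key_neg, inf_comm]
  · rw [key_sim, key_sim, sup_comm]
end

section
/- Let (A, ≺) be a subordination algebra with slanted negation ¬a := ⋁{c ∈ A | a ∧ c ≺ ⊥} in A^δ. Then the inequality ¬⊤ ≤ ⊥ holds in A^δ if and only if for all a ∈ A, a ≺ ⊥ implies a = ⊥. -/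
theorem stmt13 {A : Type*} [DistribLattice A] [BoundedOrder A]
    {Aδ : Type*} [CompleteLattice Aδ] (C : CanExt A Aδ) (S : SubordAlg A) :
    slantNeg C S.prec ⊤ ≤ ⊥ ↔ ∀ a : A, S.prec a ⊥ → a = ⊥ := by
  constructor
  · intro h a ha
    have hmem : C.e a ∈ C.e '' {c | S.prec (⊤ ⊓ c) ⊥} :=
      ⟨a, S.prec_wosi inf_le_right ha le_rfl, rfl⟩
    have : C.e a ≤ ⊥ := le_trans (le_sSup hmem) h
    have : a ≤ ⊥ := (C.le_iff a ⊥).mpr (by simpa [C.map_bot] using this)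
    exact le_bot_iff.mp this
  · intro h
    apply sSup_le
    rintro x ⟨c, hc, rfl⟩
    have : S.prec c ⊥ := S.prec_wosi (le_inf le_top le_rfl) hc le_rfl
    simp [h c this, C.map_bot]
end

section
/- Let (A, ≺) be a subordination algebra with ¬a := ⋁{c ∈ A | a ∧ c ≺ ⊥}. Then the inequality a ∧ ¬a ≤ ⊥ holds in A^δ for all a ∈ A if and only if for all b ∈ A, b ≺ ⊥ implies b = ⊥. -/
theorem stmt14 {A : Type*} [DistribLattice A] [BoundedOrder A]
    {Aδ : Type*} [CompleteLattice Aδ] (C : CanExt A Aδ) (S : SubordAlg A) :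
    (∀ a : A, C.e a ⊓ slantNeg C S.prec a ≤ ⊥) ↔
      (∀ b : A, S.prec b ⊥ → b = ⊥) := by
  constructor
  · intro h b hb
    have hbmem : b ∈ {c | S.prec (b ⊓ c) ⊥} := by
      simp only [Set.mem_setOf_eq, inf_idem]; exact hb
    have h1 : C.e b ≤ slantNeg C S.prec b :=
      le_sSup ⟨b, hbmem, rfl⟩
    have h2 : C.e b ≤ C.e ⊥ := by
      rw [C.map_bot]
      calc C.e b = C.e b ⊓ C.e b := (inf_idem _).symm
        _ ≤ C.e b ⊓ slantNeg C S.prec b := inf_le_inf_left _ h1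
        _ ≤ ⊥ := h b
    have : b ≤ ⊥ := (C.le_iff b ⊥).mpr h2
    exact le_bot_iff.mp this
  · intro h a
    set I : Set A := {c | S.prec (a ⊓ c) ⊥} with hI
    have hIne : I.Nonempty := ⟨⊥, S.prec_wosi inf_le_right S.prec_bot le_rfl⟩
    have key : ∀ k ∈ {k | (∃ F : Set A, F.Nonempty ∧ k = sInf (C.e '' F)) ∧
        k ≤ C.e a ⊓ slantNeg C S.prec a}, k ≤ ⊥ := by
      rintro k ⟨⟨F, hFne, hkF⟩, hkle⟩
      have hka : k ≤ C.e a := hkle.trans inf_le_left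
      have hkI : k ≤ sSup (C.e '' I) := hkle.trans inf_le_right
      set F₂ : Set A := insert a F with hF₂
      have hk2 : k ≤ sInf (C.e '' F₂) := by
        apply le_sInf
        rintro x ⟨c, hc, rfl⟩
        rcases hc with rfl | hc
        · exact hka
        · exact hkF.le.trans (sInf_le ⟨c, hc, rfl⟩)
      have hcomp : sInf (C.e '' F₂) ≤ sSup (C.e '' I) := by
        calc sInf (C.e '' F₂) ≤ sInf (C.e '' F) :=
              sInf_le_sInf (Set.image_mono (Set.subset_insert a F))
          _ = k := hkF.symm
          _ ≤ sSup (C.e '' I) := hkI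
      obtain ⟨F', I', hF'sub, hI'sub, hF'fin, hI'fin, hle'⟩ :=
        C.compact F₂ I (Set.insert_nonempty a F) hIne hcomp
      set t : Finset A := hI'fin.toFinset with ht
      set s : A := t.sup id with hs
      have hsup : sSup (C.e '' I') ≤ C.e s := by
        apply sSup_le
        rintro x ⟨c, hc, rfl⟩
        exact (C.le_iff c s).mp (Finset.le_sup (f := id) (hI'fin.mem_toFinset.mpr hc))
      have hks : k ≤ C.e s := by
        calc k ≤ sInf (C.e '' F₂) := hk2
          _ ≤ sInf (C.e '' F') := sInf_le_sInf (Set.image_mono hF'sub)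
          _ ≤ sSup (C.e '' I') := hle'
          _ ≤ C.e s := hsup
      have has : a ⊓ s = ⊥ := by
        rw [hs, Finset.sup_inf_distrib_left]
        refine le_bot_iff.mp (Finset.sup_le ?_)
        intro c hc
        have hcI : c ∈ I := hI'sub (hI'fin.mem_toFinset.mp hc)
        exact (h _ hcI).le
      have : k ≤ C.e (a ⊓ s) := by
        rw [C.map_inf]; exact le_inf hka hks
      rw [has, C.map_bot] at this
      exact this
    calc C.e a ⊓ slantNeg C S.prec a
        = sSup {k | (∃ F : Set A, F.Nonempty ∧ k = sInf (C.e '' F)) ∧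
            k ≤ C.e a ⊓ slantNeg C S.prec a} := C.dense_closed _
      _ ≤ ⊥ := sSup_le key
end

section
/- Let (A, ≺) be a subordination algebra with slanted implication a ⇒_≺ b := ⋁{c | a ∧ c ≺ b}. Then the inequality (⊤ ⇒_≺ b) ∧ (b ⇒_≺ c) ≤ ⊤ ⇒_≺ c holds in A^δ for all b, c ∈ A if and only if ≺ satisfies cumulative transitivity restricted as follows: for all a, b, c ∈ A, a ≺ b and a ∧ b ≺ c imply a ≺ c. -/
section Aux

variable {A : Type*} [DistribLattice A] [BoundedOrder A]
    {Aδ : Type*} [CompleteLattice Aδ] (C : CanExt A Aδ)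

private lemma exInf {F : Set A} (hfin : F.Finite) :
    ∃ f : A, sInf (C.e '' insert ⊤ F) = C.e f := by
  refine @Set.Finite.induction_on A
    (fun F _ => ∃ f : A, sInf (C.e '' insert ⊤ F) = C.e f) F hfin
    ⟨⊤, by simp [C.map_top]⟩ ?_
  rintro a F ha hfin ⟨f, hf⟩
  refine ⟨a ⊓ f, ?_⟩
  rw [Set.insert_comm, Set.image_insert_eq, sInf_insert, hf, C.map_inf]

private lemma exSup {I : Set A} (hfin : I.Finite) :
    ∃ x : A, sSup (C.e '' insert ⊥ I) = C.e x ∧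
      ∀ J : Set A, ⊥ ∈ J → (∀ u v : A, u ∈ J → v ∈ J → u ⊔ v ∈ J) → I ⊆ J → x ∈ J := by
  refine @Set.Finite.induction_on A
    (fun I _ => ∃ x : A, sSup (C.e '' insert ⊥ I) = C.e x ∧
      ∀ J : Set A, ⊥ ∈ J → (∀ u v : A, u ∈ J → v ∈ J → u ⊔ v ∈ J) → I ⊆ J → x ∈ J)
    I hfin ⟨⊥, by simp [C.map_bot], fun J hJ _ _ => hJ⟩ ?_
  rintro a I ha hfin ⟨x, hx, hxmem⟩
  refine ⟨a ⊔ x, ?_, ?_⟩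
  · rw [Set.insert_comm, Set.image_insert_eq, sSup_insert, hx, C.map_sup]
  · intro J hbot hsup hsub
    exact hsup _ _ (hsub (Set.mem_insert _ _))
      (hxmem J hbot hsup fun y hy => hsub (Set.mem_insert_of_mem _ hy))

/-- Key compactness corollary: a closed element below the join of an ideal
is below some single element of the ideal. -/
private lemma key (I : Set A) (hbot : ⊥ ∈ I)
    (hdown : ∀ x y : A, x ≤ y → y ∈ I → x ∈ I)
    (hsup : ∀ x y : A, x ∈ I → y ∈ I → x ⊔ y ∈ I)
    {F : Set A} (hF : F.Nonempty)
    (hle : sInf (C.e '' F) ≤ sSup (C.e '' I)) :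
    ∃ f ∈ I, sInf (C.e '' F) ≤ C.e f := by
  obtain ⟨F', I', hF'F, hI'I, hF'fin, hI'fin, hcomp⟩ :=
    C.compact F I hF ⟨⊥, hbot⟩ hle
  obtain ⟨f, hf⟩ := exInf C hF'fin
  obtain ⟨x, hx, hxmem⟩ := exSup C hI'fin
  refine ⟨f, ?_, ?_⟩
  · have h1 : C.e f ≤ C.e x := by
      rw [← hf, ← hx]
      calc sInf (C.e '' insert ⊤ F')
          ≤ sInf (C.e '' F') :=
            sInf_le_sInf (Set.image_mono (Set.subset_insert _ _))
        _ ≤ sSup (C.e '' I') := hcomp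
        _ ≤ sSup (C.e '' insert ⊥ I') :=
            sSup_le_sSup (Set.image_mono (Set.subset_insert _ _))
    exact hdown _ _ ((C.le_iff f x).2 h1) (hxmem I hbot hsup hI'I)
  · rw [← hf]
    refine le_sInf ?_
    rintro u ⟨y, hy, rfl⟩
    rcases Set.mem_insert_iff.mp hy with rfl | hy
    · rw [C.map_top]; exact le_top
    · exact sInf_le ⟨y, hF'F hy, rfl⟩

private lemma keySingle (I : Set A) (hbot : ⊥ ∈ I)
    (hdown : ∀ x y : A, x ≤ y → y ∈ I → x ∈ I)
    (hsup : ∀ x y : A, x ∈ I → y ∈ I → x ⊔ y ∈ I)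
    {a : A} (hle : C.e a ≤ sSup (C.e '' I)) : a ∈ I := by
  have h : sInf (C.e '' {a}) ≤ sSup (C.e '' I) := by
    rwa [Set.image_singleton, sInf_singleton]
  obtain ⟨f, hfI, hf⟩ := key C I hbot hdown hsup (Set.singleton_nonempty a) h
  rw [Set.image_singleton, sInf_singleton] at hf
  exact hdown _ _ ((C.le_iff a f).2 hf) hfI

private lemma impSet_bot (S : SubordAlg A) (a b : A) :
    ⊥ ∈ {c : A | S.prec (a ⊓ c) b} :=
  S.prec_wosi inf_le_right S.prec_bot bot_le

private lemma impSet_down (S : SubordAlg A) (a b : A) :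
    ∀ x y : A, x ≤ y → y ∈ {c : A | S.prec (a ⊓ c) b} →
      x ∈ {c : A | S.prec (a ⊓ c) b} :=
  fun _ _ hxy hy => S.prec_wosi (inf_le_inf_left a hxy) hy le_rfl

private lemma impSet_sup (S : SubordAlg A) (a b : A) :
    ∀ x y : A, x ∈ {c : A | S.prec (a ⊓ c) b} → y ∈ {c : A | S.prec (a ⊓ c) b} →
      x ⊔ y ∈ {c : A | S.prec (a ⊓ c) b} := by
  intro x y hx hy
  have : S.prec ((a ⊓ x) ⊔ (a ⊓ y)) b := S.prec_or hx hy
  simpa [inf_sup_left] using this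

end Aux

theorem stmt15 {A : Type*} [DistribLattice A] [BoundedOrder A]
    {Aδ : Type*} [CompleteLattice Aδ] (C : CanExt A Aδ) (S : SubordAlg A) :
    (∀ b c : A,
      slantImp C S.prec ⊤ b ⊓ slantImp C S.prec b c ≤ slantImp C S.prec ⊤ c) ↔
    (∀ a b c : A, S.prec a b → S.prec (a ⊓ b) c → S.prec a c) := by
  constructor
  · intro h a b c hab habc
    have h1 : C.e a ≤ slantImp C S.prec ⊤ b :=
      le_sSup ⟨a, by simpa using hab, rfl⟩
    have h2 : C.e a ≤ slantImp C S.prec b c :=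
      le_sSup ⟨a, by simpa [inf_comm] using habc, rfl⟩
    have h3 : C.e a ≤ sSup (C.e '' {z : A | S.prec (⊤ ⊓ z) c}) :=
      le_trans (le_inf h1 h2) (h b c)
    have hmem := keySingle C _ (impSet_bot S ⊤ c) (impSet_down S ⊤ c)
      (impSet_sup S ⊤ c) h3
    simpa using hmem
  · intro h b c
    rw [C.dense_closed (slantImp C S.prec ⊤ b ⊓ slantImp C S.prec b c)]
    refine sSup_le ?_
    rintro k ⟨⟨F, hF, rfl⟩, hk⟩
    have hk1 : sInf (C.e '' F) ≤ sSup (C.e '' {x : A | S.prec (⊤ ⊓ x) b}) :=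
      hk.trans inf_le_left
    have hk2 : sInf (C.e '' F) ≤ sSup (C.e '' {x : A | S.prec (b ⊓ x) c}) :=
      hk.trans inf_le_right
    obtain ⟨f₁, hf₁I, hf₁⟩ := key C _ (impSet_bot S ⊤ b) (impSet_down S ⊤ b)
      (impSet_sup S ⊤ b) hF hk1
    obtain ⟨f₂, hf₂I, hf₂⟩ := key C _ (impSet_bot S b c) (impSet_down S b c)
      (impSet_sup S b c) hF hk2
    have hfb : S.prec (f₁ ⊓ f₂) b :=
      S.prec_wosi (le_inf le_top inf_le_left) hf₁I le_rfl
    have hfbc : S.prec ((f₁ ⊓ f₂) ⊓ b) c :=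
      S.prec_wosi (le_inf inf_le_right (inf_le_left.trans inf_le_right)) hf₂I le_rfl
    have hfc : S.prec (f₁ ⊓ f₂) c := h _ _ _ hfb hfbc
    calc sInf (C.e '' F) ≤ C.e f₁ ⊓ C.e f₂ := le_inf hf₁ hf₂
      _ = C.e (f₁ ⊓ f₂) := (C.map_inf _ _).symm
      _ ≤ slantImp C S.prec ⊤ c :=
          le_sSup ⟨f₁ ⊓ f₂, S.prec_wosi inf_le_right hfc le_rfl, rfl⟩
end

section
/- Let (A, ≺) be a subordination algebra with a ⇒_≺ b := ⋁{c | a ∧ c ≺ b}. Then the inequality (a ⇒_≺ b) ∧ (b ⇒_≺ c) ≤ a ⇒_≺ c holds in A^δ for all a, b, c ∈ A if and only if for all a, b, c, d ∈ A: a ∧ d ≺ b and b ∧ d ≺ c imply a ∧ d ≺ c. -/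
lemma key_aux {A : Type*} [DistribLattice A] [BoundedOrder A]
    {Aδ : Type*} [CompleteLattice Aδ] (C : CanExt A Aδ)
    (T : Set A) (hbot : ⊥ ∈ T) (hsup : ∀ x ∈ T, ∀ y ∈ T, x ⊔ y ∈ T)
    (F : Set A) (hF : F.Nonempty)
    (h : sInf (C.e '' F) ≤ sSup (C.e '' T)) :
    ∃ d ∈ T, sInf (C.e '' F) ≤ C.e d := by
  obtain ⟨F', I', hF'F, hI'T, hF'fin, hI'fin, hle⟩ :=
    C.compact F T hF ⟨⊥, hbot⟩ h
  have hmono : sInf (C.e '' F) ≤ sInf (C.e '' F') :=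
    sInf_le_sInf (Set.image_mono hF'F)
  rcases I'.eq_empty_or_nonempty with hI | hI
  · refine ⟨⊥, hbot, ?_⟩
    rw [C.map_bot]
    calc sInf (C.e '' F) ≤ sInf (C.e '' F') := hmono
      _ ≤ sSup (C.e '' I') := hle
      _ = ⊥ := by simp [hI]
  · set t := hI'fin.toFinset with ht
    have htne : t.Nonempty := by simpa [ht] using hI
    refine ⟨t.sup' htne id, ?_, ?_⟩
    · exact Finset.sup'_mem T hsup t htne id
        (fun x hx => hI'T (by simpa [ht] using hx))
    · refine hmono.trans (hle.trans (sSup_le ?_))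
      rintro _ ⟨x, hx, rfl⟩
      have hxt : x ∈ t := by simpa [ht] using hx
      exact (C.le_iff x _).mp (Finset.le_sup' id hxt)

theorem stmt16 {A : Type*} [DistribLattice A] [BoundedOrder A]
    {Aδ : Type*} [CompleteLattice Aδ] (C : CanExt A Aδ) (S : SubordAlg A) :
    (∀ a b c : A,
      slantImp C S.prec a b ⊓ slantImp C S.prec b c ≤ slantImp C S.prec a c) ↔
    (∀ a b c d : A, S.prec (a ⊓ d) b → S.prec (b ⊓ d) c → S.prec (a ⊓ d) c) := by
  have hbot : ∀ a b : A, ⊥ ∈ {d | S.prec (a ⊓ d) b} := fun a b =>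
    S.prec_wosi inf_le_right S.prec_bot bot_le
  have hsup : ∀ a b : A, ∀ x ∈ {d | S.prec (a ⊓ d) b}, ∀ y ∈ {d | S.prec (a ⊓ d) b},
      x ⊔ y ∈ {d | S.prec (a ⊓ d) b} := by
    intro a b x hx y hy
    have : S.prec ((a ⊓ x) ⊔ (a ⊓ y)) b := S.prec_or hx hy
    simpa [inf_sup_left] using this
  constructor
  · intro h a b c d h1 h2
    have hd1 : C.e d ≤ slantImp C S.prec a b :=
      le_sSup ⟨d, h1, rfl⟩
    have hd2 : C.e d ≤ slantImp C S.prec b c :=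
      le_sSup ⟨d, h2, rfl⟩
    have hle : C.e d ≤ slantImp C S.prec a c :=
      (le_inf hd1 hd2).trans (h a b c)
    have hsing : sInf (C.e '' {d}) = C.e d := by simp
    obtain ⟨d', hd', hled'⟩ := key_aux C _ (hbot a c) (hsup a c) {d}
      (Set.singleton_nonempty d) (by rw [hsing]; exact hle)
    rw [hsing] at hled'
    have : d ≤ d' := (C.le_iff d d').mpr hled'
    exact S.prec_wosi (inf_le_inf_left a this) hd' le_rfl
  · intro h a b c
    conv_lhs => rw [C.dense_closed (slantImp C S.prec a b ⊓ slantImp C S.prec b c)]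
    refine sSup_le ?_
    rintro k ⟨⟨F, hF, rfl⟩, hk⟩
    obtain ⟨d1, hd1, hled1⟩ := key_aux C _ (hbot a b) (hsup a b) F hF
      (hk.trans inf_le_left)
    obtain ⟨d2, hd2, hled2⟩ := key_aux C _ (hbot b c) (hsup b c) F hF
      (hk.trans inf_le_right)
    have hled : sInf (C.e '' F) ≤ C.e (d1 ⊓ d2) := by
      rw [C.map_inf]; exact le_inf hled1 hled2
    have h1 : S.prec (a ⊓ (d1 ⊓ d2)) b :=
      S.prec_wosi (inf_le_inf_left a inf_le_left) hd1 le_rfl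
    have h2 : S.prec (b ⊓ (d1 ⊓ d2)) c :=
      S.prec_wosi (inf_le_inf_left b inf_le_right) hd2 le_rfl
    exact hled.trans (le_sSup ⟨d1 ⊓ d2, h a b c _ h1 h2, rfl⟩)
end

section
/- Let (A, ≺) be a subordination algebra with a ⇒_≺ b := ⋁{c | a ∧ c ≺ b}. Then ⊤ ≤ (a ⇒_≺ b) ∨ (b ⇒_≺ a) holds in A^δ if and only if there exist e, f ∈ A with ⊤ ≤ e ∨ f, a ∧ e ≺ b, and b ∧ f ≺ a. -/
private lemma finset_sup_prec {A : Type*} [DistribLattice A] [BoundedOrder A]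
    (S : SubordAlg A) (a b : A) (s : Finset A) (hs : ∀ c ∈ s, S.prec (a ⊓ c) b) :
    S.prec (a ⊓ s.sup id) b := by
  classical
  induction s using Finset.induction_on with
  | empty =>
      simp only [Finset.sup_empty, inf_bot_eq]
      exact S.prec_wosi le_rfl S.prec_bot bot_le
  | @insert c t hct ih =>
      rw [Finset.sup_insert, inf_sup_left]
      exact S.prec_or (hs c (Finset.mem_insert_self c t))
        (ih fun d hd => hs d (Finset.mem_insert_of_mem hd))

theorem stmt17 {A : Type*} [DistribLattice A] [BoundedOrder A]
    {Aδ : Type*} [CompleteLattice Aδ] (C : CanExt A Aδ) (S : SubordAlg A)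
    (a b : A) :
    (⊤ : Aδ) ≤ slantImp C S.prec a b ⊔ slantImp C S.prec b a ↔
      ∃ e f : A, ⊤ ≤ e ⊔ f ∧ S.prec (a ⊓ e) b ∧ S.prec (b ⊓ f) a := by
  classical
  constructor
  · intro h
    set S1 : Set A := {c | S.prec (a ⊓ c) b} with hS1
    set S2 : Set A := {c | S.prec (b ⊓ c) a} with hS2
    have hbot1 : (⊥ : A) ∈ S1 := by
      simp only [hS1, Set.mem_setOf_eq, inf_bot_eq]
      exact S.prec_wosi le_rfl S.prec_bot bot_le
    have hsup : sInf (C.e '' {⊤}) ≤ sSup (C.e '' (S1 ∪ S2)) := by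
      have : sInf (C.e '' {⊤}) = ⊤ := by
        simp [C.map_top]
      rw [this, Set.image_union, sSup_union]
      exact h
    obtain ⟨F', I', hF'sub, hI'sub, hF'fin, hI'fin, hle⟩ :=
      C.compact {⊤} (S1 ∪ S2) ⟨⊤, rfl⟩ ⟨⊥, Or.inl hbot1⟩ hsup
    have htop : (⊤ : Aδ) ≤ sSup (C.e '' I') := by
      refine le_trans ?_ hle
      apply le_sInf
      rintro x ⟨y, hy, rfl⟩
      have : y = ⊤ := hF'sub hy
      simp [this, C.map_top]
    set t := hI'fin.toFinset with ht
    set t1 := t.filter (· ∈ S1) with ht1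
    set t2 := t.filter (· ∈ S2) with ht2
    refine ⟨t1.sup id, t2.sup id, ?_, ?_, ?_⟩
    · have h1 : sSup (C.e '' I') ≤ C.e (t1.sup id ⊔ t2.sup id) := by
        apply sSup_le
        rintro x ⟨c, hc, rfl⟩
        have hct : c ∈ t := hI'fin.mem_toFinset.mpr hc
        rcases hI'sub hc with hc1 | hc2
        · have : c ≤ t1.sup id ⊔ t2.sup id :=
            le_sup_of_le_left (Finset.le_sup (f := id) (Finset.mem_filter.mpr ⟨hct, hc1⟩))
          exact (C.le_iff _ _).mp this
        · have : c ≤ t1.sup id ⊔ t2.sup id :=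
            le_sup_of_le_right (Finset.le_sup (f := id) (Finset.mem_filter.mpr ⟨hct, hc2⟩))
          exact (C.le_iff _ _).mp this
      have : C.e ⊤ ≤ C.e (t1.sup id ⊔ t2.sup id) := by
        rw [C.map_top]; exact le_trans htop h1
      exact (C.le_iff _ _).mpr this
    · exact finset_sup_prec S a b t1 fun c hc => (Finset.mem_filter.mp hc).2
    · exact finset_sup_prec S b a t2 fun c hc => (Finset.mem_filter.mp hc).2
  · rintro ⟨e, f, hef, he, hf⟩
    have h1 : C.e e ≤ slantImp C S.prec a b := le_sSup ⟨e, he, rfl⟩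
    have h2 : C.e f ≤ slantImp C S.prec b a := le_sSup ⟨f, hf, rfl⟩
    calc (⊤ : Aδ) = C.e ⊤ := (C.map_top).symm
      _ ≤ C.e (e ⊔ f) := (C.le_iff _ _).mp (by simpa using hef)
      _ = C.e e ⊔ C.e f := C.map_sup _ _
      _ ≤ _ := sup_le (h1.trans le_sup_left) (h2.trans le_sup_right)
end

section
/- Let (A, ≺) be a subordination algebra with a ⇒_≺ b := ⋁{c | a ∧ c ≺ b}. Then the inequality a ⇒_≺ (b ∨ c) ≤ (a ⇒_≺ b) ∨ (a ⇒_≺ c) holds in A^δ for all a, b, c ∈ A if and only if for all a, b, c, d ∈ A: d ∧ a ≺ b ∨ c implies there exist e, f ∈ A with d ≤ e ∨ f, e ∧ a ≺ b, and f ∧ a ≺ c. -/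
private lemma finsup_aux {A : Type*} [DistribLattice A] [BoundedOrder A]
    (S : SubordAlg A) (a b : A) {T : Set A} (hT : T.Finite)
    (h : ∀ t ∈ T, S.prec (a ⊓ t) b) :
    ∃ s : A, (∀ t ∈ T, t ≤ s) ∧ S.prec (a ⊓ s) b := by
  revert h
  refine Set.Finite.induction_on T hT ?_ ?_
  · intro _
    refine ⟨⊥, by simp, ?_⟩
    exact S.prec_wosi (by simp) S.prec_bot bot_le
  · intro t T _ _ ih h
    obtain ⟨s, hs, hps⟩ := ih (fun x hx => h x (Set.mem_insert_of_mem _ hx))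
    refine ⟨t ⊔ s, ?_, ?_⟩
    · rintro x (rfl | hx)
      · exact le_sup_left
      · exact le_trans (hs x hx) le_sup_right
    · have := S.prec_or (h t (Set.mem_insert _ _)) hps
      exact S.prec_wosi (le_of_eq (inf_sup_left a t s)) this le_rfl

theorem stmt18 {A : Type*} [DistribLattice A] [BoundedOrder A]
    {Aδ : Type*} [CompleteLattice Aδ] (C : CanExt A Aδ) (S : SubordAlg A) :
    (∀ a b c : A,
      slantImp C S.prec a (b ⊔ c) ≤ slantImp C S.prec a b ⊔ slantImp C S.prec a c) ↔
    (∀ a b c d : A, S.prec (d ⊓ a) (b ⊔ c) →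
      ∃ e f : A, d ≤ e ⊔ f ∧ S.prec (e ⊓ a) b ∧ S.prec (f ⊓ a) c) := by
  constructor
  · intro H a b c d hd
    set S₁ : Set A := {x | S.prec (a ⊓ x) b} with hS₁
    set S₂ : Set A := {x | S.prec (a ⊓ x) c} with hS₂
    have hbot₁ : (⊥ : A) ∈ S₁ := S.prec_wosi (by simp) S.prec_bot bot_le
    have hd' : C.e d ≤ sSup (C.e '' (S₁ ∪ S₂)) := by
      have h1 : C.e d ≤ slantImp C S.prec a (b ⊔ c) := by
        apply le_sSup
        exact ⟨d, S.prec_wosi (le_of_eq (inf_comm a d)) hd le_rfl, rfl⟩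
      have h2 := H a b c
      calc C.e d ≤ slantImp C S.prec a b ⊔ slantImp C S.prec a c := h1.trans h2
        _ = sSup (C.e '' (S₁ ∪ S₂)) := by
            rw [Set.image_union, sSup_union]; rfl
    obtain ⟨F', I', hF'sub, hI'sub, hF'fin, hI'fin, hle⟩ :=
      C.compact {d} (S₁ ∪ S₂) ⟨d, rfl⟩ ⟨⊥, Or.inl hbot₁⟩
        (by rwa [Set.image_singleton, sInf_singleton])
    have hdI' : C.e d ≤ sSup (C.e '' I') := by
      refine le_trans (le_sInf ?_) hle
      rintro y ⟨x, hx, rfl⟩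
      rcases hF'sub hx with rfl
      exact le_rfl
    obtain ⟨s₁, hs₁, hp₁⟩ := finsup_aux S a b (hI'fin.inter_of_left S₁)
      (fun t ht => ht.2)
    obtain ⟨s₂, hs₂, hp₂⟩ := finsup_aux S a c (hI'fin.inter_of_left S₂)
      (fun t ht => ht.2)
    refine ⟨s₁, s₂, ?_, S.prec_wosi (le_of_eq (inf_comm s₁ a)) hp₁ le_rfl,
      S.prec_wosi (le_of_eq (inf_comm s₂ a)) hp₂ le_rfl⟩
    rw [C.le_iff]
    refine hdI'.trans ?_
    apply sSup_le
    rintro y ⟨x, hx, rfl⟩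
    rw [← C.le_iff]
    rcases hI'sub hx with h1 | h2
    · exact le_trans (hs₁ x ⟨hx, h1⟩) le_sup_left
    · exact le_trans (hs₂ x ⟨hx, h2⟩) le_sup_right
  · intro H a b c
    apply sSup_le
    rintro y ⟨x, hx, rfl⟩
    obtain ⟨e, f, hef, he, hf⟩ := H a b c x
      (S.prec_wosi (le_of_eq (inf_comm x a)) hx le_rfl)
    have : C.e x ≤ C.e e ⊔ C.e f := by
      rw [← C.map_sup, ← C.le_iff]; exact hef
    refine this.trans (sup_le_sup ?_ ?_)
    · exact le_sSup ⟨e, S.prec_wosi (le_of_eq (inf_comm a e)) he le_rfl, rfl⟩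
    · exact le_sSup ⟨f, S.prec_wosi (le_of_eq (inf_comm a f)) hf le_rfl, rfl⟩
end

section
/- Let (A, ≺) be a subordination algebra with ¬a := ⋁{c | a ∧ c ≺ ⊥}. Then the inequality ¬(a ∧ b) ≤ ¬a ∨ ¬b holds in A^δ for all a, b ∈ A if and only if for all a, b, d ∈ A: d ∧ a ∧ b ≺ ⊥ implies there exist e, f ∈ A with d ≤ e ∨ f, e ∧ a ≺ ⊥, and f ∧ b ≺ ⊥. -/
private lemma finsup_prec {A : Type*} [DistribLattice A] [BoundedOrder A]
    (S : SubordAlg A) (a : A) (s : Finset A)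
    (h : ∀ c ∈ s, S.prec (a ⊓ c) ⊥) : S.prec (s.sup id ⊓ a) ⊥ := by
  classical
  induction s using Finset.induction_on with
  | empty =>
      have : (∅ : Finset A).sup id ⊓ a ≤ ⊥ := by simp
      exact S.prec_wosi this S.prec_bot le_rfl
  | @insert x s hx ih =>
      have h1 : S.prec (x ⊓ a) ⊥ :=
        S.prec_wosi (le_of_eq (inf_comm x a)) (h x (Finset.mem_insert_self x s)) le_rfl
      have h2 : S.prec (s.sup id ⊓ a) ⊥ :=
        ih (fun c hc => h c (Finset.mem_insert_of_mem hc))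
      have h3 : S.prec ((x ⊓ a) ⊔ (s.sup id ⊓ a)) ⊥ := S.prec_or h1 h2
      have heq : (insert x s).sup id ⊓ a = (x ⊓ a) ⊔ (s.sup id ⊓ a) := by
        rw [Finset.sup_insert, inf_sup_right]; rfl
      exact S.prec_wosi (le_of_eq heq) h3 le_rfl

theorem stmt19 {A : Type*} [DistribLattice A] [BoundedOrder A]
    {Aδ : Type*} [CompleteLattice Aδ] (C : CanExt A Aδ) (S : SubordAlg A) :
    (∀ a b : A,
      slantNeg C S.prec (a ⊓ b) ≤ slantNeg C S.prec a ⊔ slantNeg C S.prec b) ↔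
    (∀ a b d : A, S.prec (d ⊓ a ⊓ b) ⊥ →
      ∃ e f : A, d ≤ e ⊔ f ∧ S.prec (e ⊓ a) ⊥ ∧ S.prec (f ⊓ b) ⊥) := by
  constructor
  · intro H a b d hd
    classical
    set S1 : Set A := {c | S.prec (a ⊓ c) ⊥} with hS1
    set S2 : Set A := {c | S.prec (b ⊓ c) ⊥} with hS2
    have hbot1 : (⊥ : A) ∈ S1 := S.prec_wosi (le_of_eq (by simp)) S.prec_bot le_rfl
    have hd' : S.prec ((a ⊓ b) ⊓ d) ⊥ := by
      have hle : (a ⊓ b) ⊓ d ≤ d ⊓ a ⊓ b :=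
        le_inf (le_inf inf_le_right (inf_le_left.trans inf_le_left))
          (inf_le_left.trans inf_le_right)
      exact S.prec_wosi hle hd le_rfl
    have h1 : C.e d ≤ slantNeg C S.prec (a ⊓ b) :=
      le_sSup ⟨d, hd', rfl⟩
    have h2 : C.e d ≤ sSup (C.e '' (S1 ∪ S2)) := by
      refine h1.trans ((H a b).trans ?_)
      rw [Set.image_union, sSup_union]
      exact le_rfl
    have h3 : sInf (C.e '' ({d} : Set A)) ≤ sSup (C.e '' (S1 ∪ S2)) := by
      simpa using h2
    obtain ⟨F', I', hF', hI', hFfin, hIfin, hle⟩ :=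
      C.compact {d} (S1 ∪ S2) ⟨d, rfl⟩ ⟨⊥, Or.inl hbot1⟩ h3
    set t := hIfin.toFinset with ht
    set ea := (t.filter (fun c => S.prec (a ⊓ c) ⊥)).sup id with hea
    set fb := (t.filter (fun c => S.prec (b ⊓ c) ⊥)).sup id with hfb
    refine ⟨ea, fb, ?_, ?_, ?_⟩
    · have hd2 : C.e d ≤ sInf (C.e '' F') := by
        apply le_sInf
        rintro x ⟨y, hy, rfl⟩
        have := hF' hy
        simp only [Set.mem_singleton_iff] at this
        subst this; exact le_rfl
      have hup : sSup (C.e '' I') ≤ C.e (ea ⊔ fb) := by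
        apply sSup_le
        rintro x ⟨c, hc, rfl⟩
        have hct : c ∈ t := hIfin.mem_toFinset.mpr hc
        rcases hI' hc with h | h
        · have : c ≤ ea := Finset.le_sup (f := id) (Finset.mem_filter.mpr ⟨hct, h⟩)
          exact (C.le_iff _ _).mp (this.trans le_sup_left)
        · have : c ≤ fb := Finset.le_sup (f := id) (Finset.mem_filter.mpr ⟨hct, h⟩)
          exact (C.le_iff _ _).mp (this.trans le_sup_right)
      exact (C.le_iff _ _).mpr ((hd2.trans hle).trans hup)
    · exact finsup_prec S a _ (fun c hc => (Finset.mem_filter.mp hc).2)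
    · exact finsup_prec S b _ (fun c hc => (Finset.mem_filter.mp hc).2)
  · intro H a b
    apply sSup_le
    rintro x ⟨c, hc, rfl⟩
    have hc' : S.prec (c ⊓ a ⊓ b) ⊥ := by
      have hle : c ⊓ a ⊓ b ≤ (a ⊓ b) ⊓ c :=
        le_inf (le_inf (inf_le_left.trans inf_le_right) inf_le_right)
          ((inf_le_left.trans inf_le_left))
      exact S.prec_wosi hle hc le_rfl
    obtain ⟨e, f, hle, he, hf⟩ := H a b c hc'
    have h1 : C.e e ≤ slantNeg C S.prec a :=
      le_sSup ⟨e, S.prec_wosi (le_of_eq (inf_comm a e)) he le_rfl, rfl⟩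
    have h2 : C.e f ≤ slantNeg C S.prec b :=
      le_sSup ⟨f, S.prec_wosi (le_of_eq (inf_comm b f)) hf le_rfl, rfl⟩
    calc C.e c ≤ C.e (e ⊔ f) := (C.le_iff _ _).mp hle
      _ = C.e e ⊔ C.e f := C.map_sup e f
      _ ≤ _ := sup_le (h1.trans le_sup_left) (h2.trans le_sup_right)
end
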